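/- Assume q is odd and let n ≥ 1. For all a, c₀, c₁, …, c_n ∈ k^×, with the convention t_n := 1, Σ_{z∈k^×} Σ_{(t₁,…,t_{n−1})∈(k^×)^{n−1}} ω₀(z) · ψ( Σ_{i=1}^{n−1} (t_i/t_{i+1})·c_i + c_n·z^{−1} + z·a·c₀·t₁^{−2} ) = ω₀(a·c₀) · Kl_α^{n+1}(ψ; (2,…,2,1,1), (𝟙,…,𝟙,ω₀)), where α := a·c₁²⋯c_{n−1}²·c_n·c₀, the weight vector (2,…,2,1,1) has n−1 entries equal to 2 followed by two entries equal to 1, and the character vector consists of n trivial characters followed by ω₀. (This finite-field identity is the computation underlying the twisted character values of θ-stable simple supercuspidal representations of GL_{2n} at affine generic elements.) -/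

import Mathlib

open scoped BigOperators

/-- The Kloosterman sum `Kl_u^{r}(ψ; (k₁,…,k_r), (χ₁,…,χ_r))` attached to a finite field `k`,
a nontrivial additive character `ψ` of `k`, weights `w` and multiplicative characters `χs`:
the sum of `ψ(x₁+⋯+x_r)·χ₁(x₁)⋯χ_r(x_r)` over all `(x₁,…,x_r) ∈ (k^×)^r`
with `x₁^{k₁}⋯x_r^{k_r} = u`. -/
noncomputable def Kl {k : Type*} [Field k] [Fintype k] [DecidableEq k]
    (ψ : AddChar k ℂ) {r : ℕ} (w : Fin r → ℕ) (χs : Fin r → MulChar k ℂ) (u : kˣ) : ℂ :=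
  ∑ x : Fin r → kˣ,
    if ∏ i, x i ^ w i = u then ψ (∑ i, ((x i : k))) * ∏ i, χs i ((x i : k)) else 0
private lemma prod_Ico_div_telescope {G : Type*} [CommGroup G] (f : ℕ → G) {a b : ℕ}
    (h : a ≤ b) : ∏ i ∈ Finset.Ico a b, (f i / f (i + 1)) = f a / f b := by
  induction b, h using Nat.le_induction with
  | base => simp
  | succ b hab ih => rw [Finset.prod_Ico_succ_top hab, ih, div_mul_div_cancel]

private lemma prod_fin_split {M : Type*} [CommMonoid M] {m : ℕ} (g : Fin (m + 2) → M) :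
    ∏ i, g i = (∏ i : Fin m, g ⟨i.1, by omega⟩) * g ⟨m, by omega⟩ * g ⟨m + 1, by omega⟩ := by
  rw [Fin.prod_univ_castSucc, Fin.prod_univ_castSucc]
  rfl

private lemma sum_fin_split {M : Type*} [AddCommMonoid M] {m : ℕ} (g : Fin (m + 2) → M) :
    ∑ i, g i = (∑ i : Fin m, g ⟨i.1, by omega⟩) + g ⟨m, by omega⟩ + g ⟨m + 1, by omega⟩ := by
  rw [Fin.sum_univ_castSucc, Fin.sum_univ_castSucc]
  rfl

/-- extend a `Fin m`-indexed family of units by `1`. -/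
def Tex {k : Type*} [Field k] {m : ℕ} (t : Fin m → kˣ) : ℕ → kˣ :=
  fun j => if h : j < m then t ⟨j, h⟩ else 1

private lemma Tex_telescope {k : Type*} [Field k] {m : ℕ} (t : Fin m → kˣ) {j : ℕ} (hj : j ≤ m) :
    ∏ i ∈ Finset.Ico j m, (Tex t i / Tex t (i + 1)) = Tex t j := by
  rw [prod_Ico_div_telescope (Tex t) hj, show Tex t m = 1 from dif_neg (lt_irrefl m), div_one]

private lemma prod_Ico_Tex {k : Type*} [Field k] {m : ℕ} (h : Fin m → kˣ) :
    ∏ i ∈ Finset.Ico 0 m, Tex h i = ∏ i : Fin m, h i := by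
  rw [← Finset.range_eq_Ico, ← Fin.prod_univ_eq_prod_range]
  exact Finset.prod_congr rfl fun i _ => by simp [Tex, i.isLt]

def Xmap {k : Type*} [Field k] (m : ℕ) (a c0 : kˣ) (cc : ℕ → kˣ)
    (p : kˣ × (Fin m → kˣ)) : Fin (m + 2) → kˣ :=
  fun j => if j.1 < m then Tex p.2 j.1 * cc j.1 / Tex p.2 (j.1 + 1)
    else if j.1 = m then cc m / p.1
    else p.1 * a * c0 / (Tex p.2 0) ^ 2

def Gmap {k : Type*} [Field k] (m : ℕ) (a c0 : kˣ) (cc : ℕ → kˣ)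
    (x : Fin (m + 2) → kˣ) : kˣ × (Fin m → kˣ) :=
  (cc m / x ⟨m, by omega⟩,
   fun j => ∏ i ∈ Finset.Ico j.1 m, Tex (fun i : Fin m => x ⟨i.1, by omega⟩ / cc i.1) i)

/-- **Twisted character values of `θ`-stable simple supercuspidal representations of `GL_{2n}`
at affine generic elements, as a finite-field identity.** For `q` odd, `n ≥ 1` and
`a, c₀, c₁, …, cₙ ∈ k^×` (here `c i` denotes `c_{i+1}`), with the convention `tₙ := 1`,
`Σ_{z∈k^×} Σ_{t₁,…,t_{n−1}∈k^×} ω₀(z)·ψ( Σ_{i=1}^{n−1}(tᵢ/t_{i+1})·cᵢ + cₙ·z^{−1}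
    + z·a·c₀·t₁^{−2} )
  = ω₀(a·c₀)·Kl_α^{n+1}(ψ; (2,…,2,1,1), (𝟙,…,𝟙,ω₀))`
with `α = a·c₁²⋯c_{n−1}²·cₙ·c₀`. -/
theorem twisted_char_simple_supercuspidal_GL {k : Type*} [Field k] [Fintype k] [DecidableEq k]
    (hq : Odd (Fintype.card k))
    (ψ : AddChar k ℂ) (hψ : ∃ x : k, ψ x ≠ 1)
    (ω₀ : MulChar k ℂ) (hω₂ : ω₀ ^ 2 = 1) (hω₁ : ω₀ ≠ 1)
    (n : ℕ) (hn : 1 ≤ n)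
    (a c0 : kˣ) (c : Fin n → kˣ) :
    ∑ z : kˣ, ∑ t : Fin (n - 1) → kˣ,
      ω₀ (z : k) *
        ψ ((∑ i : Fin (n - 1),
              ((t i : k) /
                  (if hlt : i.1 + 1 < n - 1 then (t ⟨i.1 + 1, hlt⟩ : k) else 1))
                * (c ⟨i.1, by have := i.isLt; omega⟩ : k))
            + (c ⟨n - 1, by omega⟩ : k) / (z : k)
            + (z : k) * (a : k) * (c0 : k) /
                (if hlt : (0 : ℕ) < n - 1 then (t ⟨0, hlt⟩ : k) else 1) ^ 2)
    = ω₀ ((a : k) * (c0 : k)) *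
        Kl ψ (fun i : Fin (n + 1) => if (i : ℕ) < n - 1 then 2 else 1)
          (fun i : Fin (n + 1) => if (i : ℕ) < n then 1 else ω₀)
          (a * (∏ i : Fin (n - 1), c ⟨i.1, by have := i.isLt; omega⟩ ^ 2)
            * c ⟨n - 1, by omega⟩ * c0) := by
  obtain ⟨m, rfl⟩ : ∃ m, n = m + 1 := ⟨n - 1, by omega⟩
  simp only [Nat.add_sub_cancel]
  set cc : ℕ → kˣ := fun j => if h : j < m + 1 then c ⟨j, h⟩ else 1 with hcc
  have hccf : ∀ (j : ℕ) (h : j < m + 1), cc j = c ⟨j, h⟩ := fun j h => dif_pos h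
  have hccprod : ∀ (h : Fin m → kˣ),
      (∏ i : Fin m, h i) = ∏ i : Fin (m + 1 - 1), h ⟨i.1, i.isLt⟩ := fun h => rfl
  rw [← Fintype.sum_prod_type']
  rw [Kl, ← Finset.sum_filter, Finset.mul_sum]
  refine Finset.sum_nbij' (Xmap m a c0 cc) (Gmap m a c0 cc) ?_ ?_ ?_ ?_ ?_
  · -- membership: constraint holds
    rintro ⟨z, t⟩ -
    simp only [Finset.mem_filter, Finset.mem_univ, true_and]
    rw [prod_fin_split]
    have e1 : (∏ i : Fin m, Xmap m a c0 cc (z, t) ⟨i.1, by omega⟩ ^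
        (if ((⟨i.1, by omega⟩ : Fin (m + 2)) : ℕ) < m then 2 else 1))
        = (Tex t 0) ^ 2 * ∏ i : Fin m, cc i.1 ^ 2 := by
      have : ∀ i : Fin m, Xmap m a c0 cc (z, t) ⟨i.1, by omega⟩ ^
          (if ((⟨i.1, by omega⟩ : Fin (m + 2)) : ℕ) < m then 2 else 1)
          = (Tex t i.1 / Tex t (i.1 + 1)) ^ 2 * cc i.1 ^ 2 := by
        intro i
        simp only [Xmap]
        rw [if_pos i.isLt, if_pos i.isLt, mul_div_right_comm, mul_pow]
      rw [Finset.prod_congr rfl fun i _ => this i, Finset.prod_mul_distrib, Finset.prod_pow]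
      congr 1
      rw [Fin.prod_univ_eq_prod_range (fun i => Tex t i / Tex t (i + 1)) m,
        Finset.range_eq_Ico,
        show (∏ i ∈ Finset.Ico 0 m, (Tex t i / Tex t (i + 1))) = Tex t 0 from
          Tex_telescope t (Nat.zero_le _)]
    rw [e1]
    have e2 : Xmap m a c0 cc (z, t) ⟨m, by omega⟩ ^
        (if ((⟨m, by omega⟩ : Fin (m + 2)) : ℕ) < m then 2 else 1) = cc m / z := by
      simp [Xmap]
    have e3 : Xmap m a c0 cc (z, t) ⟨m + 1, by omega⟩ ^
        (if ((⟨m + 1, by omega⟩ : Fin (m + 2)) : ℕ) < m then 2 else 1) =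
        z * a * c0 / (Tex t 0) ^ 2 := by
      simp [Xmap]
    rw [e2, e3]
    have e4 : (∏ i : Fin (m + 1 - 1), c ⟨i.1, by have := i.isLt; omega⟩ ^ 2)
        = ∏ i : Fin m, cc i.1 ^ 2 :=
      Finset.prod_congr rfl fun i _ => by rw [hccf i.1 (by have := i.isLt; omega)]
    rw [e4, ← hccf m (by omega)]
    rw [← Units.val_inj]
    simp only [Units.val_mul, Units.val_div_eq_div_val, Units.val_pow_eq_pow_val]
    field_simp
  · intro x _; exact Finset.mem_univ _
  · -- left inverse
    rintro ⟨z, t⟩ -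
    refine Prod.ext ?_ (funext fun j => ?_)
    · show cc m / Xmap m a c0 cc (z, t) ⟨m, by omega⟩ = z
      rw [show Xmap m a c0 cc (z, t) ⟨m, by omega⟩ = cc m / z by simp [Xmap]]
      rw [← Units.val_inj]
      simp only [Units.val_mul, Units.val_div_eq_div_val]
      field_simp
    · show (∏ i ∈ Finset.Ico (j.1 : ℕ) m,
          Tex (fun i : Fin m => Xmap m a c0 cc (z, t) ⟨i.1, by omega⟩ / cc i.1) i) = t j
      have key : ∀ i ∈ Finset.Ico (j.1 : ℕ) m,
          Tex (fun i : Fin m => Xmap m a c0 cc (z, t) ⟨i.1, by omega⟩ / cc i.1) i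
            = Tex t i / Tex t (i + 1) := by
        intro i hi
        obtain ⟨-, hi2⟩ := Finset.mem_Ico.mp hi
        rw [show Tex (fun i : Fin m => Xmap m a c0 cc (z, t) ⟨i.1, by omega⟩ / cc i.1) i
            = Xmap m a c0 cc (z, t) ⟨i, by omega⟩ / cc i from dif_pos hi2]
        rw [show Xmap m a c0 cc (z, t) ⟨i, by omega⟩
            = Tex t i * cc i / Tex t (i + 1) from if_pos hi2]
        rw [← Units.val_inj]
        simp only [Units.val_mul, Units.val_div_eq_div_val]
        field_simp
      rw [Finset.prod_congr rfl key,
        show (∏ i ∈ Finset.Ico (j.1 : ℕ) m, (Tex t i / Tex t (i + 1))) = Tex t j.1 from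
          Tex_telescope t (by omega),
        show Tex t j.1 = t j from by
          rw [show Tex t j.1 = t ⟨j.1, by omega⟩ from dif_pos (by omega)]; rfl]
  · -- right inverse
    intro x hx
    simp only [Finset.mem_filter, Finset.mem_univ, true_and] at hx
    set g : ℕ → kˣ := Tex (fun i : Fin m => x ⟨i.1, by omega⟩ / cc i.1) with hg
    have hTex : ∀ jj : ℕ, jj ≤ m →
        Tex (Gmap m a c0 cc x).2 jj = ∏ i ∈ Finset.Ico jj m, g i := by
      intro jj hjj
      rcases lt_or_eq_of_le hjj with h | h
      · exact dif_pos h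
      · rw [h, show Tex (Gmap m a c0 cc x).2 m = 1 from dif_neg (lt_irrefl _),
          Finset.Ico_self, Finset.prod_empty]
    have hx' : (∏ i : Fin m, x (⟨i.1, by omega⟩ : Fin (m + 2))) ^ 2
        * x ⟨m, by omega⟩ * x ⟨m + 1, by omega⟩
        = a * (∏ i : Fin m, cc i.1) ^ 2 * cc m * c0 := by
      rw [prod_fin_split] at hx
      rw [Finset.prod_congr rfl (fun (i : Fin m) _ => by
          rw [if_pos i.isLt] :
          ∀ i ∈ Finset.univ, x (⟨i.1, by omega⟩ : Fin (m + 2)) ^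
            (if ((⟨i.1, by omega⟩ : Fin (m + 2)) : ℕ) < m then 2 else 1)
            = x (⟨i.1, by omega⟩ : Fin (m + 2)) ^ 2),
        if_neg (lt_irrefl m), if_neg (show ¬ m + 1 < m by omega), pow_one, pow_one,
        Finset.prod_pow] at hx
      rw [hx]
      rw [show (∏ i : Fin (m + 1 - 1), c ⟨i.1, by have := i.isLt; omega⟩ ^ 2)
          = (∏ i : Fin m, cc i.1) ^ 2 from by
        rw [← Finset.prod_pow]
        exact Finset.prod_congr rfl fun i _ => by rw [hccf i.1 (by have := i.isLt; omega)],
        ← hccf m (by omega)]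
    funext j
    by_cases hj : (j : ℕ) < m
    · rw [show Xmap m a c0 cc (Gmap m a c0 cc x) j
          = Tex (Gmap m a c0 cc x).2 j.1 * cc j.1 / Tex (Gmap m a c0 cc x).2 (j.1 + 1)
          from if_pos hj]
      rw [hTex j.1 (le_of_lt hj), hTex (j.1 + 1) hj,
        Finset.prod_eq_prod_Ico_succ_bot hj g,
        show g j.1 = x ⟨j.1, by omega⟩ / cc j.1 from dif_pos hj,
        show x (⟨j.1, by omega⟩ : Fin (m + 2)) = x j from congrArg x (Fin.ext rfl)]
      rw [mul_right_comm, div_mul_cancel, mul_div_cancel_right]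
    · by_cases hj2 : (j : ℕ) = m
      · rw [show Xmap m a c0 cc (Gmap m a c0 cc x) j = cc m / (Gmap m a c0 cc x).1
            from by rw [show Xmap m a c0 cc (Gmap m a c0 cc x) j
              = if (j : ℕ) = m then cc m / (Gmap m a c0 cc x).1
                else (Gmap m a c0 cc x).1 * a * c0 / (Tex (Gmap m a c0 cc x).2 0) ^ 2
              from if_neg hj, if_pos hj2],
          show (Gmap m a c0 cc x).1 = cc m / x ⟨m, by omega⟩ from rfl,
          show x j = x ⟨m, by omega⟩ from congrArg x (Fin.ext hj2)]
        exact div_div_cancel _ _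
      · have hj3 : (j : ℕ) = m + 1 := by omega
        rw [show Xmap m a c0 cc (Gmap m a c0 cc x) j
            = (Gmap m a c0 cc x).1 * a * c0 / (Tex (Gmap m a c0 cc x).2 0) ^ 2
            from by rw [show Xmap m a c0 cc (Gmap m a c0 cc x) j
              = if (j : ℕ) = m then cc m / (Gmap m a c0 cc x).1
                else (Gmap m a c0 cc x).1 * a * c0 / (Tex (Gmap m a c0 cc x).2 0) ^ 2
              from if_neg hj, if_neg hj2],
          show (Gmap m a c0 cc x).1 = cc m / x ⟨m, by omega⟩ from rfl,
          hTex 0 (Nat.zero_le m), hg, prod_Ico_Tex, Finset.prod_div_distrib,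
          show x j = x ⟨m + 1, by omega⟩ from congrArg x (Fin.ext hj3)]
        rw [← Units.val_inj] at hx' ⊢
        simp only [← Units.coeHom_apply, map_prod, map_mul, map_div, map_pow] at hx' ⊢
        simp only [Units.coeHom_apply] at hx' ⊢
        have hne1 : ((x ⟨m, by omega⟩ : kˣ) : k) ≠ 0 := Units.ne_zero _
        have hne2 : (∏ i : Fin m, ((x ⟨i.1, by omega⟩ : kˣ) : k)) ≠ 0 :=
          Finset.prod_ne_zero_iff.mpr fun i _ => Units.ne_zero _
        field_simp [hne1, hne2]
        linear_combination -hx'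
  · -- values
    rintro ⟨z, t⟩ -
    dsimp only
    have hTexcoe : ∀ jj : ℕ, ((Tex t jj : kˣ) : k)
        = if h : jj < m then ((t ⟨jj, h⟩ : kˣ) : k) else 1 := by
      intro jj
      by_cases h : jj < m
      · rw [show Tex t jj = t ⟨jj, h⟩ from dif_pos h, dif_pos h]
      · rw [show Tex t jj = 1 from dif_neg h, dif_neg h, Units.val_one]
    simp only [← hTexcoe, ← hccf]
    have hsum : (∑ i : Fin (m + 1 + 1), ((Xmap m a c0 cc (z, t) i : k)))
        = (∑ x : Fin (m + 1 - 1),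
            ((t x : k) / ((Tex t (x.1 + 1) : kˣ) : k)) * ((cc x.1 : kˣ) : k))
          + ((cc m : kˣ) : k) / (z : k)
          + (z : k) * (a : k) * (c0 : k) / ((Tex t 0 : kˣ) : k) ^ 2 := by
      rw [sum_fin_split]
      congr 1
      congr 1
      · refine Finset.sum_congr rfl fun i _ => ?_
        rw [show Xmap m a c0 cc (z, t) ⟨i.1, by omega⟩
            = Tex t i.1 * cc i.1 / Tex t (i.1 + 1) from if_pos i.isLt,
          show Tex t i.1 = t ⟨i.1, by omega⟩ from dif_pos i.isLt,
          Units.val_div_eq_div_val, Units.val_mul, mul_div_right_comm]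
        rfl
      · rw [show Xmap m a c0 cc (z, t) ⟨m, by omega⟩ = cc m / z from by simp [Xmap],
          Units.val_div_eq_div_val]
      · rw [show Xmap m a c0 cc (z, t) ⟨m + 1, by omega⟩
            = z * a * c0 / (Tex t 0) ^ 2 from by simp [Xmap],
          Units.val_div_eq_div_val, Units.val_mul, Units.val_mul, Units.val_pow_eq_pow_val]
    have hXlast : Xmap m a c0 cc (z, t) ⟨m + 1, by omega⟩
        = z * a * c0 / (Tex t 0) ^ 2 := by simp [Xmap]
    have hchi : (∏ i : Fin (m + 1 + 1),
          (if (i : ℕ) < m + 1 then (1 : MulChar k ℂ) else ω₀) ((Xmap m a c0 cc (z, t) i : k)))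
        = ω₀ ((Xmap m a c0 cc (z, t) ⟨m + 1, by omega⟩ : k)) := by
      rw [prod_fin_split]
      rw [show (if ((⟨m, by omega⟩ : Fin (m + 2)) : ℕ) < m + 1 then (1 : MulChar k ℂ) else ω₀)
          = 1 from if_pos (Nat.lt_succ_self m),
        show (if ((⟨m + 1, by omega⟩ : Fin (m + 2)) : ℕ) < m + 1 then (1 : MulChar k ℂ) else ω₀)
          = ω₀ from if_neg (lt_irrefl (m + 1)),
        MulChar.one_apply_coe,
        Finset.prod_congr rfl (fun (i : Fin m) _ =>
          (by rw [show (if ((⟨i.1, by omega⟩ : Fin (m + 2)) : ℕ) < m + 1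
                then (1 : MulChar k ℂ) else ω₀) = 1 from if_pos (Nat.lt_succ_of_lt i.isLt)]
              exact MulChar.one_apply_coe _ :
            (if ((⟨i.1, by omega⟩ : Fin (m + 2)) : ℕ) < m + 1 then (1 : MulChar k ℂ) else ω₀)
              ((Xmap m a c0 cc (z, t) ⟨i.1, by omega⟩ : k)) = 1))]
      simp
    have homega : ω₀ ((a : k) * (c0 : k))
        * ω₀ ((Xmap m a c0 cc (z, t) ⟨m + 1, by omega⟩ : k)) = ω₀ (z : k) := by
      rw [hXlast, show ((a : k) * (c0 : k)) = ((a * c0 : kˣ) : k) from (Units.val_mul a c0).symm,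
        ← map_mul, ← Units.val_mul,
        show (a * c0) * (z * a * c0 / (Tex t 0) ^ 2) = z * (a * c0 / Tex t 0) ^ 2 from by
          rw [← Units.val_inj]
          simp only [Units.val_mul, Units.val_div_eq_div_val, Units.val_pow_eq_pow_val]
          field_simp,
        Units.val_mul, map_mul, Units.val_pow_eq_pow_val, map_pow, ← MulChar.pow_apply_coe,
        hω₂, MulChar.one_apply_coe, mul_one]
    rw [hsum, hchi, ← homega]
    ring
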